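/- arXiv:1710.09969 — 2 statements merged into one kernel-verified Lean document; each statement's English description precedes it below -/
import Mathlib

section
/- Let π: S^1 → S^1 be the p-fold covering map z ↦ z^p. If a chord diagram D is p-colorable (its intersection graph admits a proper p-coloring), then D admits a lift D̃ under π (a chord diagram on the covering circle with π(D̃) = D as multisets of chords) whose chords are pairwise non-intersecting (i.e., D̃ is 1-colorable). -/
/-!  The circle `S¹` is modelled as `AddCircle (1 : ℝ) = ℝ/ℤ`, with its circular order.
A chord is an (ordered) pair of distinct points; a chord diagram with `n` chords is a
map `Fin n → S¹ × S¹` whose `2n` legs are pairwise distinct.  The `p`-fold covering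
map `S¹ → S¹` is `x ↦ p • x`. -/

instance : Fact ((0:ℝ) < 1) := ⟨one_pos⟩

/-- The circle `ℝ/ℤ`. -/
abbrev 𝕊 : Type := AddCircle (1 : ℝ)

/-- The legs of the chord diagram `D`. -/
def legs {n : ℕ} (D : Fin n → 𝕊 × 𝕊) : Fin n × Bool → 𝕊 :=
  fun p => if p.2 then (D p.1).1 else (D p.1).2

/-- `D` is a chord diagram: all `2n` endpoints of its chords are pairwise distinct. -/
def IsChordDiagram {n : ℕ} (D : Fin n → 𝕊 × 𝕊) : Prop :=
  Function.Injective (legs D)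

/-- The chords `{a,b}` and `{c,d}` intersect: the four points occur in alternating
order around the circle. -/
def CrossesPts (a b c d : 𝕊) : Prop :=
  (sbtw a c b ∧ sbtw b d a) ∨ (sbtw a d b ∧ sbtw b c a)

/-- Two chords, given as pairs of points, intersect. -/
def CrossPair (s t : 𝕊 × 𝕊) : Prop := CrossesPts s.1 s.2 t.1 t.2

/-- `E` is a lift of the chord diagram `D` under the `p`-fold covering `x ↦ p • x`:
each leg of `E` is a preimage of the corresponding leg of `D`. -/
def IsLift (p : ℕ) {n : ℕ} (D E : Fin n → 𝕊 × 𝕊) : Prop :=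
  ∀ i, p • (E i).1 = (D i).1 ∧ p • (E i).2 = (D i).2

/-! ### Auxiliary machinery -/

/-- A canonical representative in `[0,1)` of a point of the circle. -/
noncomputable def rep (x : 𝕊) : ℝ := (AddCircle.equivIco 1 0 x : ℝ)

lemma rep_mem (x : 𝕊) : rep x ∈ Set.Ico (0:ℝ) 1 := by
  have := (AddCircle.equivIco 1 0 x).2
  simpa [rep] using this

lemma rep_coe (x : 𝕊) : ((rep x : ℝ) : 𝕊) = x := (AddCircle.equivIco 1 0).symm_apply_apply x

lemma myIco {a b : ℝ} (ha : a ∈ Set.Ico (0:ℝ) 1) (hb : b ∈ Set.Ico (0:ℝ) 1) :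
    toIcoMod one_pos a b = if a ≤ b then b else b + 1 := by
  obtain ⟨ha0, ha1⟩ := ha; obtain ⟨hb0, hb1⟩ := hb
  split_ifs with h
  · exact (toIcoMod_eq_self one_pos).mpr ⟨h, by linarith⟩
  · rw [← toIcoMod_add_right]
    exact (toIcoMod_eq_self one_pos).mpr ⟨by linarith, by linarith⟩

lemma myIoc {a b : ℝ} (ha : a ∈ Set.Ico (0:ℝ) 1) (hb : b ∈ Set.Ico (0:ℝ) 1) :
    toIocMod one_pos a b = if a < b then b else b + 1 := by
  obtain ⟨ha0, ha1⟩ := ha; obtain ⟨hb0, hb1⟩ := hb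
  split_ifs with h
  · exact (toIocMod_eq_self one_pos).mpr ⟨h, by linarith⟩
  · rw [← toIocMod_add_right]
    exact (toIocMod_eq_self one_pos).mpr ⟨by linarith, by linarith⟩

lemma btw_char {a b c : ℝ} (ha : a ∈ Set.Ico (0:ℝ) 1) (hb : b ∈ Set.Ico (0:ℝ) 1)
    (hc : c ∈ Set.Ico (0:ℝ) 1) :
    Btw.btw (a:𝕊) (b:𝕊) (c:𝕊) ↔
      (if a ≤ b then b else b + 1) ≤ (if a < c then c else c + 1) := by
  rw [QuotientAddGroup.btw_coe_iff, myIco ha hb, myIoc ha hc]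

lemma sbtw_char {a b c : ℝ} (ha : a ∈ Set.Ico (0:ℝ) 1) (hb : b ∈ Set.Ico (0:ℝ) 1)
    (hc : c ∈ Set.Ico (0:ℝ) 1) :
    SBtw.sbtw (a:𝕊) (b:𝕊) (c:𝕊) ↔ (a<b ∧ b<c) ∨ (b<c ∧ c<a) ∨ (c<a ∧ a<b) := by
  rw [sbtw_iff_btw_not_btw, btw_char ha hb hc, btw_char hc hb ha]
  obtain ⟨ha0, ha1⟩ := ha; obtain ⟨hb0, hb1⟩ := hb; obtain ⟨hc0, hc1⟩ := hc
  constructor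
  · rintro ⟨h1, h2⟩
    rw [not_le] at h2
    split_ifs at h1 h2 <;>
      first
        | (exfalso; linarith)
        | (left; exact ⟨by linarith, by linarith⟩)
        | (right; left; exact ⟨by linarith, by linarith⟩)
        | (right; right; exact ⟨by linarith, by linarith⟩)
  · intro h
    refine ⟨?_, ?_⟩
    · rcases h with ⟨h1,h2⟩|⟨h1,h2⟩|⟨h1,h2⟩ <;> split_ifs <;> linarith
    · rw [not_le]
      rcases h with ⟨h1,h2⟩|⟨h1,h2⟩|⟨h1,h2⟩ <;> split_ifs <;> linarith

lemma crosses_char {a b x y : ℝ} (ha : a ∈ Set.Ico (0:ℝ) 1) (hb : b ∈ Set.Ico (0:ℝ) 1)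
    (hx : x ∈ Set.Ico (0:ℝ) 1) (hy : y ∈ Set.Ico (0:ℝ) 1) :
    CrossesPts (a:𝕊) b x y ↔
      ((((a<x∧x<b) ∨ (x<b∧b<a) ∨ (b<a∧a<x)) ∧ ((b<y∧y<a) ∨ (y<a∧a<b) ∨ (a<b∧b<y))) ∨
       (((a<y∧y<b) ∨ (y<b∧b<a) ∨ (b<a∧a<y)) ∧ ((b<x∧x<a) ∨ (x<a∧a<b) ∨ (a<b∧b<x)))) := by
  unfold CrossesPts
  rw [sbtw_char ha hx hb, sbtw_char hb hy ha, sbtw_char ha hy hb, sbtw_char hb hx ha]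

/-- If a chord diagram `D` admits a proper `p`-coloring (intersecting chords receive
distinct colors), then `D` admits a lift under the `p`-fold covering whose chords are
pairwise non-intersecting (i.e. a 1-colorable lift). -/
theorem exists_noncrossing_lift_of_colorable {p n : ℕ} (hp : 0 < p)
    (D : Fin n → 𝕊 × 𝕊) (hD : IsChordDiagram D)
    (col : Fin n → Fin p)
    (hcol : ∀ i j, CrossPair (D i) (D j) → col i ≠ col j) :
    ∃ E : Fin n → 𝕊 × 𝕊, IsLift p D E ∧
      ∀ i j, i ≠ j → ¬ CrossPair (E i) (E j) := by
  have hp' : (0:ℝ) < p := by exact_mod_cast hp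
  -- the lifting map into the `k`-th fundamental domain
  set φ : Fin n → 𝕊 → ℝ := fun i x => (rep x + ((col i : ℕ) : ℝ)) / p with hφ
  have hφmem : ∀ i x, φ i x ∈ Set.Ico (0:ℝ) 1 := by
    intro i x
    obtain ⟨h0, h1⟩ := rep_mem x
    have hk : ((col i : ℕ) : ℝ) ≤ (p : ℝ) - 1 := by
      have := (col i).is_lt
      have : ((col i : ℕ) : ℝ) + 1 ≤ (p : ℝ) := by exact_mod_cast this
      linarith
    constructor
    · positivity
    · rw [div_lt_one hp']
      linarith
  have hφmem' : ∀ i x, φ i x ∈ Set.Ico (((col i : ℕ):ℝ)/p) ((((col i : ℕ):ℝ)+1)/p) := by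
    intro i x
    obtain ⟨h0, h1⟩ := rep_mem x
    constructor
    · exact (div_le_div_iff_of_pos_right hp').mpr (by linarith)
    · exact (div_lt_div_iff_of_pos_right hp').mpr (by linarith)
  refine ⟨fun i => (↑(φ i (D i).1), ↑(φ i (D i).2)), ?_, ?_⟩
  · -- it is a lift
    intro i
    have key : ∀ x : 𝕊, p • ((φ i x : ℝ) : 𝕊) = x := by
      intro x
      have h1 : p • ((φ i x : ℝ) : 𝕊) = (((p : ℕ) • φ i x : ℝ) : 𝕊) := rfl
      rw [h1]
      have h2 : (p : ℕ) • φ i x = rep x + ((col i : ℕ) : ℝ) := by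
        rw [hφ]; simp only [nsmul_eq_mul]; field_simp
      rw [h2]
      have h3 : ((rep x + ((col i : ℕ) : ℝ) : ℝ) : 𝕊) = ((rep x : ℝ) : 𝕊) := by
        have h4 : ((((col i : ℕ) : ℝ)) : 𝕊) = 0 := by
          rw [QuotientAddGroup.eq_zero_iff]
          exact AddSubgroup.mem_zmultiples_iff.mpr ⟨(col i : ℕ), by simp⟩
        rw [QuotientAddGroup.mk_add, h4, add_zero]
      rw [h3, rep_coe]
    exact ⟨key _, key _⟩
  · -- chords don't cross
    intro i j hij hcross
    rw [CrossPair] at hcross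
    have Hi1 := hφmem i (D i).1
    have Hi2 := hφmem i (D i).2
    have Hj1 := hφmem j (D j).1
    have Hj2 := hφmem j (D j).2
    rw [crosses_char Hi1 Hi2 Hj1 Hj2] at hcross
    rcases eq_or_ne (col i) (col j) with hc | hc
    · -- same color: the original chords cross, contradiction with the coloring
      apply hcol i j ?_ hc
      have key : ∀ x y : 𝕊, φ i x < φ j y ↔ rep x < rep y := by
        intro x y
        rw [hφ]
        simp only [hc]
        rw [div_lt_div_iff_of_pos_right hp', add_lt_add_iff_right]
      have key2 : ∀ x y : 𝕊, φ i x < φ i y ↔ rep x < rep y := by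
        intro x y; rw [hφ, div_lt_div_iff_of_pos_right hp', add_lt_add_iff_right]
      have key3 : ∀ x y : 𝕊, φ j x < φ j y ↔ rep x < rep y := by
        intro x y; rw [hφ, div_lt_div_iff_of_pos_right hp', add_lt_add_iff_right]
      have key4 : ∀ x y : 𝕊, φ j x < φ i y ↔ rep x < rep y := by
        intro x y
        rw [hφ]
        simp only [hc]
        rw [div_lt_div_iff_of_pos_right hp', add_lt_add_iff_right]
      simp only [key, key2, key3, key4] at hcross
      rw [CrossPair, ← rep_coe (D i).1, ← rep_coe (D i).2, ← rep_coe (D j).1,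
        ← rep_coe (D j).2,
        crosses_char (rep_mem _) (rep_mem _) (rep_mem _) (rep_mem _)]
      exact hcross
    · -- different colors: the lifted chords live in disjoint arcs
      have hkm : (col i : ℕ) ≠ (col j : ℕ) := fun h => hc (Fin.ext h)
      obtain ⟨Ai1, Ai2⟩ := hφmem' i (D i).1
      obtain ⟨Bi1, Bi2⟩ := hφmem' i (D i).2
      obtain ⟨Aj1, Aj2⟩ := hφmem' j (D j).1
      obtain ⟨Bj1, Bj2⟩ := hφmem' j (D j).2
      have hsep : (((col i : ℕ):ℝ)+1)/p ≤ ((col j : ℕ):ℝ)/p ∨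
          (((col j : ℕ):ℝ)+1)/p ≤ ((col i : ℕ):ℝ)/p := by
        rcases lt_or_gt_of_ne hkm with h | h
        · left
          refine (div_le_div_iff_of_pos_right hp').mpr ?_
          have := Nat.succ_le_of_lt h
          exact_mod_cast this
        · right
          refine (div_le_div_iff_of_pos_right hp').mpr ?_
          have := Nat.succ_le_of_lt h
          exact_mod_cast this
      rcases hsep with hsep | hsep <;>
        rcases hcross with ⟨h1, h2⟩ | ⟨h1, h2⟩ <;>
        rcases h1 with ⟨h1a,h1b⟩|⟨h1a,h1b⟩|⟨h1a,h1b⟩ <;>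
        rcases h2 with ⟨h2a,h2b⟩|⟨h2a,h2b⟩|⟨h2a,h2b⟩ <;>
        linarith
end

section
/- If the intersection graph of a chord diagram D is connected and D has at least two chords, then D has genus at least 1, equivalently the number of boundary components of the associated surface is at most n - 1 where n is the number of chords. -/
/-!  Combinatorial model of chord diagrams: the circle carries `m` marked points
`Fin m` in cyclic order; a chord diagram is an involution `f` of `Fin m`, whose
2-cycles `{i, f i}` are the chords (fixed points are unused marked points). -/

/-- Number of cycles (including fixed points) of a permutation of `Fin m`. -/
def cycleCount {m : ℕ} (σ : Equiv.Perm (Fin m)) : ℕ :=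
  Multiset.card σ.cycleType + (m - σ.support.card)

/-- Number of boundary components of the surface obtained from the disk bounded by the
circle by attaching a band along each chord `{i, f i}` of the involution `f`:
the boundary components are the cycles of `rotation ∘ f`. -/
def boundaryCount {m : ℕ} (f : Equiv.Perm (Fin m)) : ℕ :=
  cycleCount (finRotate m * f)

/-- Number of chords of the chord diagram given by the involution `f`. -/
def numChords {m : ℕ} (f : Equiv.Perm (Fin m)) : ℕ := f.support.card / 2

/-- Genus of the surface associated to the chord diagram (via the classification of
surfaces: `s = n + 1 - 2g`). -/
def genus {m : ℕ} (f : Equiv.Perm (Fin m)) : ℕ :=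
  (numChords f + 1 - boundaryCount f) / 2

/-- `j` lies strictly inside the chord `{i, f i}`. -/
def Inside {m : ℕ} (f : Equiv.Perm (Fin m)) (i j : Fin m) : Prop :=
  min i (f i) < j ∧ j < max i (f i)

/-- The chords `{i, f i}` and `{j, f j}` of the diagram `f` intersect: the four
endpoints are distinct and exactly one endpoint of one chord lies inside the other. -/
def Crosses {m : ℕ} (f : Equiv.Perm (Fin m)) (i j : Fin m) : Prop :=
  f i ≠ i ∧ f j ≠ j ∧ j ≠ i ∧ j ≠ f i ∧ (Inside f i j ↔ ¬ Inside f i (f j))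

namespace ChordProofAux

open Equiv Equiv.Perm Finset


set_option linter.unusedSectionVars false

attribute [local instance] Classical.propDecidable

variable {α : Type*} [Fintype α] [DecidableEq α]

/-- The setoid of "same cycle" for a permutation. -/
def scs (σ : Perm α) : Setoid α := ⟨σ.SameCycle, SameCycle.equivalence σ⟩

/-- Number of cycles (orbits) of a permutation, counted as classes of `SameCycle`. -/
noncomputable def N (σ : Perm α) : ℕ := Fintype.card (Quotient (scs σ))

theorem sameCycle_invariant {σ : Perm α} {P : α → Prop} (hP : ∀ x, P (σ x) ↔ P x)
    {x y : α} (h : σ.SameCycle x y) : P x ↔ P y := by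
  obtain ⟨i, rfl⟩ := h
  suffices H : ∀ j : ℤ, P ((σ ^ j) x) ↔ P x from (H i).symm
  intro j
  induction j using Int.induction_on with
  | zero => simp
  | succ k ih =>
    rw [show ((k : ℤ) + 1) = 1 + (k : ℤ) by ring, zpow_add, zpow_one,
      Equiv.Perm.mul_apply, hP, ih]
  | pred k ih =>
    rw [show (-(k : ℤ) - 1) = -1 + -(k : ℤ) by ring, zpow_add, zpow_neg_one,
      Equiv.Perm.mul_apply, ← ih]
    have := hP (σ⁻¹ ((σ ^ (-(k:ℤ))) x))
    rw [← Equiv.Perm.mul_apply, mul_inv_cancel, Equiv.Perm.one_apply] at this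
    exact this.symm

/-- The merge of the same-cycle relation along the pair `{a, b}`. -/
def Rel3 (σ : Perm α) (a b x y : α) : Prop :=
  σ.SameCycle x y ∨ (σ.SameCycle x a ∧ σ.SameCycle b y) ∨ (σ.SameCycle x b ∧ σ.SameCycle a y)

theorem Rel3.refl (σ : Perm α) (a b x : α) : Rel3 σ a b x x := Or.inl (SameCycle.refl σ x)

theorem Rel3.trans_right {σ : Perm α} {a b x y z : α} (h : Rel3 σ a b x y)
    (h' : σ.SameCycle y z) : Rel3 σ a b x z := by
  rcases h with h | ⟨h1, h2⟩ | ⟨h1, h2⟩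
  · exact Or.inl (h.trans h')
  · exact Or.inr (Or.inl ⟨h1, h2.trans h'⟩)
  · exact Or.inr (Or.inr ⟨h1, h2.trans h'⟩)

theorem sc_mul_swap_imp {σ : Perm α} {a b x y : α}
    (h : (σ * swap a b).SameCycle x y) : Rel3 σ a b x y := by
  obtain ⟨i, hlt, rfl⟩ := h.exists_pow_eq'
  clear hlt h
  induction i with
  | zero => simpa using Rel3.refl σ a b x
  | succ k ih =>
    rw [pow_succ', Equiv.Perm.mul_apply]
    set z := ((σ * swap a b) ^ k) x with hz
    have hbsb : σ.SameCycle b (σ b) := ⟨1, by simp⟩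
    have hasa : σ.SameCycle a (σ a) := ⟨1, by simp⟩
    rcases eq_or_ne z a with hza | hwa
    · rw [Equiv.Perm.mul_apply, hza, swap_apply_left]
      rw [hza] at ih
      rcases ih with hw | ⟨h1, h2⟩ | ⟨h1, h2⟩
      · exact Or.inr (Or.inl ⟨hw, hbsb⟩)
      · exact Or.inr (Or.inl ⟨h1, hbsb⟩)
      · exact Or.inl (h1.trans hbsb)
    · rcases eq_or_ne z b with hzb | hwb
      · rw [Equiv.Perm.mul_apply, hzb, swap_apply_right]
        rw [hzb] at ih
        rcases ih with hw | ⟨h1, h2⟩ | ⟨h1, h2⟩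
        · exact Or.inr (Or.inr ⟨hw, hasa⟩)
        · exact Or.inl (h1.trans hasa)
        · exact Or.inr (Or.inr ⟨h1, hasa⟩)
      · rw [Equiv.Perm.mul_apply, swap_apply_of_ne_of_ne hwa hwb]
        exact ih.trans_right ⟨1, by simp⟩

theorem sc_mul_swap_pair {σ : Perm α} {a b : α} (hns : ¬ σ.SameCycle a b) :
    (σ * swap a b).SameCycle a b := by
  have hord : 0 < orderOf σ := orderOf_pos σ
  have hex : ∃ j, 0 < j ∧ (σ ^ j) b = b := ⟨orderOf σ, hord, by simp [pow_orderOf_eq_one]⟩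
  set k := Nat.find hex with hkdef
  have hk : 0 < k ∧ (σ ^ k) b = b := Nat.find_spec hex
  have hmin : ∀ i, i < k → ¬(0 < i ∧ (σ ^ i) b = b) := fun i hi => Nat.find_min hex hi
  have key : ∀ j, j + 1 ≤ k → ((σ * swap a b) ^ (j + 1)) a = (σ ^ (j + 1)) b := by
    intro j
    induction j with
    | zero => intro _; simp [Equiv.Perm.mul_apply]
    | succ i ih =>
      intro hik
      have hih := ih (by omega)
      have hne_b : (σ ^ (i + 1)) b ≠ b := fun hbb => hmin (i + 1) (by omega) ⟨by omega, hbb⟩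
      have hne_a : (σ ^ (i + 1)) b ≠ a := by
        intro haa
        exact hns (SameCycle.symm ⟨((i + 1 : ℕ) : ℤ), by rw [zpow_natCast]; exact haa⟩)
      rw [pow_succ', Equiv.Perm.mul_apply, hih, Equiv.Perm.mul_apply,
        swap_apply_of_ne_of_ne hne_a hne_b, pow_succ' (n := i + 1), Equiv.Perm.mul_apply]
  refine ⟨(k : ℤ), ?_⟩
  rw [zpow_natCast]
  obtain ⟨j, hj⟩ : ∃ j, k = j + 1 := ⟨k - 1, by omega⟩
  rw [hj, key j (by omega), ← hj, hk.2]


theorem mul_swap_swap (σ : Perm α) (a b : α) : (σ * swap a b) * swap a b = σ := by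
  rw [mul_assoc, swap_mul_self, mul_one]

/-- If `a, b` are in the same cycle of `σ * swap a b`, the same-cycle relation of `σ`
is included in that of `σ * swap a b`. -/
theorem sc_le_mul_swap {σ : Perm α} {a b : α} (hab : (σ * swap a b).SameCycle a b) :
    ∀ {x y : α}, σ.SameCycle x y → (σ * swap a b).SameCycle x y := by
  intro x y h
  have h' : ((σ * swap a b) * swap a b).SameCycle x y := by rwa [mul_swap_swap]
  have := sc_mul_swap_imp h'
  rcases this with h | ⟨h1, h2⟩ | ⟨h1, h2⟩
  · exact h
  · exact (h1.trans hab).trans h2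
  · exact (h1.trans hab.symm).trans h2

theorem sc_mul_swap_iff {σ : Perm α} {a b : α} (hns : ¬ σ.SameCycle a b) {x y : α} :
    (σ * swap a b).SameCycle x y ↔ Rel3 σ a b x y := by
  have hab : (σ * swap a b).SameCycle a b := sc_mul_swap_pair hns
  constructor
  · exact sc_mul_swap_imp
  · rintro (h | ⟨h1, h2⟩ | ⟨h1, h2⟩)
    · exact sc_le_mul_swap hab h
    · exact ((sc_le_mul_swap hab h1).trans hab).trans (sc_le_mul_swap hab h2)
    · exact ((sc_le_mul_swap hab h1).trans hab.symm).trans (sc_le_mul_swap hab h2)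

/-- Merging two distinct cycles by a transposition drops the cycle count by one. -/
theorem N_mul_swap_merge {σ : Perm α} {a b : α} (hns : ¬ σ.SameCycle a b) :
    N (σ * swap a b) + 1 = N σ := by
  have hab : (σ * swap a b).SameCycle a b := sc_mul_swap_pair hns
  set τ := σ * swap a b with hτ
  -- the natural surjection
  let g : Quotient (scs σ) → Quotient (scs τ) :=
    Quotient.lift (fun x => Quotient.mk (scs τ) x)
      (fun x y hxy => Quotient.sound (sc_le_mul_swap hab hxy))
  have hgmk : ∀ x : α, g (Quotient.mk (scs σ) x) = Quotient.mk (scs τ) x := fun _ => rfl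
  let qb : Quotient (scs σ) := Quotient.mk (scs σ) b
  -- restricted to classes other than that of b, it is a bijection
  have hbij : Function.Bijective (fun q : {q : Quotient (scs σ) // q ≠ qb} => g q.1) := by
    constructor
    · rintro ⟨q1, h1⟩ ⟨q2, h2⟩ heq
      induction q1 using Quotient.ind with | _ x =>
      induction q2 using Quotient.ind with | _ y =>
      have hx : ¬ σ.SameCycle x b := fun hc => h1 (Quotient.sound hc)
      have hy : ¬ σ.SameCycle y b := fun hc => h2 (Quotient.sound hc)
      simp only [hgmk] at heq
      have hsc : τ.SameCycle x y := Quotient.exact heq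
      have := sc_mul_swap_imp (by rwa [← hτ] : (σ * swap a b).SameCycle x y)
      rcases this with h | ⟨h1', h2'⟩ | ⟨h1', h2'⟩
      · exact Subtype.ext (Quotient.sound h)
      · exact absurd h2'.symm hy
      · exact absurd h1' hx
    · intro q
      induction q using Quotient.ind with | _ x =>
      by_cases hxb : σ.SameCycle x b
      · refine ⟨⟨Quotient.mk (scs σ) a, fun hc => hns (Quotient.exact hc)⟩, ?_⟩
        simp only [hgmk]
        exact Quotient.sound (hab.trans (sc_le_mul_swap hab hxb.symm))
      · exact ⟨⟨Quotient.mk (scs σ) x, fun hc => hxb (Quotient.exact hc)⟩, rfl⟩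
  have hcard1 : Fintype.card {q : Quotient (scs σ) // q ≠ qb} = N τ :=
    Fintype.card_of_bijective hbij
  have hcard2 : Fintype.card {q : Quotient (scs σ) // ¬ q = qb} =
      Fintype.card (Quotient (scs σ)) - Fintype.card {q : Quotient (scs σ) // q = qb} :=
    Fintype.card_subtype_compl _
  have hcard3 : Fintype.card {q : Quotient (scs σ) // q = qb} = 1 := Fintype.card_subtype_eq qb
  have hpos : 0 < Fintype.card (Quotient (scs σ)) := Fintype.card_pos_iff.mpr ⟨qb⟩
  have : Fintype.card {q : Quotient (scs σ) // q ≠ qb} =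
      Fintype.card {q : Quotient (scs σ) // ¬ q = qb} := rfl
  have hcard1' : Fintype.card {q : Quotient (scs σ) // q ≠ qb} =
      Fintype.card (Quotient (scs τ)) := hcard1
  have h4 : N τ = Fintype.card (Quotient (scs σ)) - 1 := by
    rw [N, ← hcard1', this, hcard2, hcard3]
  have h5 : N σ = Fintype.card (Quotient (scs σ)) := rfl
  omega

/-- Multiplying by a transposition increases the cycle count by at most one. -/
theorem N_mul_swap_le (σ : Perm α) (a b : α) : N (σ * swap a b) ≤ N σ + 1 := by
  by_cases h : (σ * swap a b).SameCycle a b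
  · -- surjection from classes of σ onto classes of σ * swap a b
    have hsurj : Function.Surjective
        (Quotient.lift (fun x => Quotient.mk (scs (σ * swap a b)) x)
          (fun x y hxy => Quotient.sound (sc_le_mul_swap h hxy)) :
          Quotient (scs σ) → Quotient (scs (σ * swap a b))) := by
      intro q
      induction q using Quotient.ind with | _ x =>
      exact ⟨Quotient.mk (scs σ) x, rfl⟩
    have := Fintype.card_le_of_surjective _ hsurj
    exact le_trans this (Nat.le_succ _)
  · have := N_mul_swap_merge h
    rw [mul_swap_swap] at this
    omega

theorem cycleCount_eq_N {m : ℕ} (σ : Perm (Fin m)) : cycleCount σ = N σ := by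
  classical
  -- the bijection from classes to (cycle factors) ⊕ (fixed points)
  let F : Quotient (scs σ) → σ.cycleFactorsFinset ⊕ {x : Fin m // σ x = x} :=
    Quotient.lift (fun x =>
      if h : σ x = x then Sum.inr ⟨x, h⟩
      else Sum.inl ⟨σ.cycleOf x, cycleOf_mem_cycleFactorsFinset_iff.mpr (mem_support.mpr h)⟩)
      (by
        intro x y hxy
        have hxy' : σ.SameCycle x y := hxy
        by_cases h : σ x = x
        · have : x = y := hxy'.eq_of_left h
          subst this; rfl
        · have h' : ¬ σ y = y := by
            intro hy; exact h (((hxy'.symm).eq_of_left hy) ▸ hy)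
          simp only [dif_neg h, dif_neg h']
          congr 1
          exact Subtype.ext hxy'.cycleOf_eq)
  have hbij : Function.Bijective F := by
    constructor
    · intro q1 q2
      induction q1 using Quotient.ind with | _ x =>
      induction q2 using Quotient.ind with | _ y =>
      intro heq
      simp only [F, Quotient.lift_mk] at heq
      split_ifs at heq with hx hy hy
      · obtain rfl : x = y := by simpa using heq
        rfl
      · have hco : σ.cycleOf x = σ.cycleOf y := by simpa using heq
        have hysup : y ∈ (σ.cycleOf y).support :=
          mem_support_cycleOf_iff.mpr ⟨SameCycle.rfl, mem_support.mpr hy⟩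
        rw [← hco] at hysup
        exact Quotient.sound (mem_support_cycleOf_iff.mp hysup).1
    · rintro (⟨c, hc⟩ | ⟨x, hx⟩)
      · obtain ⟨x, hxc⟩ := (mem_cycleFactorsFinset_iff.mp hc).1.nonempty_support
        have hxs : σ x ≠ x := by
          have := (mem_cycleFactorsFinset_iff.mp hc).2 x hxc
          have hcx : c x ≠ x := mem_support.mp hxc
          rw [this] at hcx; exact hcx
        refine ⟨Quotient.mk (scs σ) x, ?_⟩
        simp only [F, Quotient.lift_mk, dif_neg hxs]
        congr 1
        exact Subtype.ext (cycle_is_cycleOf hxc hc).symm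
      · exact ⟨Quotient.mk (scs σ) x, by simp only [F, Quotient.lift_mk, dif_pos hx]⟩
  have hcard : Fintype.card (Quotient (scs σ)) =
      Fintype.card (σ.cycleFactorsFinset ⊕ {x : Fin m // σ x = x}) :=
    Fintype.card_of_bijective hbij
  rw [N, hcard, Fintype.card_sum, Fintype.card_coe]
  have h1 : Multiset.card σ.cycleType = σ.cycleFactorsFinset.card := by
    rw [cycleType]; simp
  have h2 : Fintype.card {x : Fin m // σ x = x} = m - σ.support.card := by
    have hle : σ.support.card ≤ m := by
      simpa using Finset.card_le_card (Finset.subset_univ σ.support)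
    have : Fintype.card {x : Fin m // ¬ σ x ≠ x} =
        Fintype.card (Fin m) - Fintype.card {x : Fin m // σ x ≠ x} :=
      Fintype.card_subtype_compl _
    have hsup : Fintype.card {x : Fin m // σ x ≠ x} = σ.support.card := by
      rw [Fintype.card_subtype]
      congr 1
    have hiff : Fintype.card {x : Fin m // σ x = x} =
        Fintype.card {x : Fin m // ¬ σ x ≠ x} := by
      apply Fintype.card_congr
      exact Equiv.subtypeEquivRight (by intro x; tauto)
    rw [hiff, this, hsup, Fintype.card_fin]
  rw [cycleCount, h1, h2]

theorem cycleCount_mul_swap_le {m : ℕ} (σ : Perm (Fin m)) (a b : Fin m) :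
    cycleCount (σ * Equiv.swap a b) ≤ cycleCount σ + 1 := by
  rw [cycleCount_eq_N, cycleCount_eq_N]
  exact N_mul_swap_le σ a b

theorem cycleCount_mul_swap_merge {m : ℕ} {σ : Perm (Fin m)} {a b : Fin m}
    (h : ¬ σ.SameCycle a b) : cycleCount (σ * Equiv.swap a b) + 1 = cycleCount σ := by
  rw [cycleCount_eq_N, cycleCount_eq_N]
  exact N_mul_swap_merge h

theorem cycleCount_mul_involution_aux {m : ℕ} :
    ∀ (k : ℕ) (h : Perm (Fin m)), h.support.card ≤ k → h * h = 1 →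
      ∀ σ : Perm (Fin m), cycleCount (σ * h) ≤ cycleCount σ + h.support.card / 2 := by
  intro k
  induction k with
  | zero =>
    intro h hk hh σ
    have h1 : h = 1 := by
      rw [← Equiv.Perm.support_eq_empty_iff, ← Finset.card_eq_zero]
      omega
    simp [h1]
  | succ k ih =>
    intro h hk hh σ
    by_cases h1 : h = 1
    · simp [h1]
    obtain ⟨x, hx⟩ : ∃ x, h x ≠ x := by
      by_contra hc
      push_neg at hc
      exact h1 (Equiv.ext hc)
    have hpt : ∀ y, h (h y) = y := fun y => by
      rw [← Equiv.Perm.mul_apply, hh, Equiv.Perm.one_apply]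
    set h' := h * Equiv.swap x (h x) with hh'
    have hvx : h' x = x := by
      rw [hh', Equiv.Perm.mul_apply, swap_apply_left, hpt]
    have hvhx : h' (h x) = h x := by
      rw [hh', Equiv.Perm.mul_apply, swap_apply_right]
    have hvother : ∀ y, y ≠ x → y ≠ h x → h' y = h y := fun y hy1 hy2 => by
      rw [hh', Equiv.Perm.mul_apply, swap_apply_of_ne_of_ne hy1 hy2]
    have hinv' : h' * h' = 1 := by
      apply Equiv.ext
      intro y
      rw [Equiv.Perm.mul_apply, Equiv.Perm.one_apply]
      by_cases hy1 : y = x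
      · rw [hy1, hvx, hvx]
      · by_cases hy2 : y = h x
        · rw [hy2, hvhx, hvhx]
        · rw [hvother y hy1 hy2]
          have hn1 : h y ≠ x := fun e => hy2 (by rw [← hpt y, e])
          have hn2 : h y ≠ h x := fun e => hy1 (by rw [← hpt y, e, hpt])
          rw [hvother _ hn1 hn2, hpt]
    have hsub : h'.support ⊆ (h.support.erase x).erase (h x) := by
      intro y hy
      rw [Equiv.Perm.mem_support] at hy
      have hy1 : y ≠ x := fun e => hy (by rw [e, hvx])
      have hy2 : y ≠ h x := fun e => hy (by rw [e, hvhx])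
      rw [Finset.mem_erase, Finset.mem_erase, Equiv.Perm.mem_support]
      refine ⟨hy2, hy1, ?_⟩
      rw [← hvother y hy1 hy2]
      exact hy
    have hmemx : x ∈ h.support := Equiv.Perm.mem_support.mpr hx
    have hmemhx : h x ∈ h.support.erase x := by
      rw [Finset.mem_erase]
      refine ⟨hx, ?_⟩
      rw [Equiv.Perm.mem_support]
      intro e
      exact hx (by rw [← hpt x, e, e])
    have hcard' : h'.support.card ≤ h.support.card - 2 := by
      have := Finset.card_le_card hsub
      rw [Finset.card_erase_of_mem hmemhx, Finset.card_erase_of_mem hmemx] at this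
      omega
    have hcard2 : 2 ≤ h.support.card := by
      have := Finset.card_le_card (show ({x, h x} : Finset (Fin m)) ⊆ h.support by
        intro y hy
        rcases Finset.mem_insert.mp hy with rfl | hy
        · exact hmemx
        · rw [Finset.mem_singleton.mp hy]
          exact Finset.mem_of_mem_erase hmemhx)
      rwa [Finset.card_pair (fun e => hx e.symm)] at this
    have hdec : h = h' * Equiv.swap x (h x) := (mul_swap_swap h x (h x)).symm
    have step1 : cycleCount (σ * h) ≤ cycleCount (σ * h') + 1 := by
      have : σ * h = (σ * h') * Equiv.swap x (h x) := by
        rw [mul_assoc, ← hdec]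
      rw [this]
      exact cycleCount_mul_swap_le _ _ _
    have step2 : cycleCount (σ * h') ≤ cycleCount σ + h'.support.card / 2 :=
      ih h' (by omega) hinv' σ
    omega

theorem cycleCount_mul_involution {m : ℕ} (σ h : Perm (Fin m)) (hh : h * h = 1) :
    cycleCount (σ * h) ≤ cycleCount σ + h.support.card / 2 :=
  cycleCount_mul_involution_aux h.support.card h le_rfl hh σ

set_option maxHeartbeats 1000000

theorem val_finRotate {m : ℕ} (z : Fin m) :
    ((finRotate m) z : ℕ) = if (z : ℕ) + 1 = m then 0 else (z : ℕ) + 1 := by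
  rcases m with _ | m'
  · exact z.elim0
  · rw [finRotate_succ_apply, Fin.val_add_one]
    by_cases hz : z = Fin.last m'
    · rw [if_pos hz, if_pos (by rw [hz]; simp [Fin.val_last])]
    · rw [if_neg hz, if_neg (by
        intro hc
        exact hz (Fin.ext (by simpa [Fin.val_last] using hc)))]

theorem not_sameCycle_sigma1 {n : ℕ} (f : Perm (Fin (2 * n))) (hf : ∀ x, f (f x) = x)
    {a b : Fin (2 * n)} (hcr : Crosses f a b) :
    ¬ (finRotate (2 * n) * Equiv.swap a (f a)).SameCycle b (f b) := by
  obtain ⟨hfa, hfb, hba, hbfa, hiff⟩ := hcr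
  have hfbne_a : f b ≠ a := fun e => hbfa (by rw [← e, hf b])
  have hfbne_fa : f b ≠ f a := fun e => hba (by rw [← hf b, e, hf a])
  set u := min a (f a) with hu
  set v := max a (f a) with hv
  have huv : u < v := min_lt_max.mpr (Ne.symm hfa)
  have hsw : Equiv.swap a (f a) = Equiv.swap u v := by
    rcases le_total a (f a) with h | h
    · rw [hu, hv, min_eq_left h, max_eq_right h]
    · rw [hu, hv, min_eq_right h, max_eq_left h, Equiv.swap_comm]
  intro hsc
  rw [hsw] at hsc
  -- the invariant: the arc (u, v]
  have hP : ∀ z : Fin (2 * n),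
      ((u : ℕ) < ((finRotate (2 * n) * Equiv.swap u v) z : ℕ) ∧
        ((finRotate (2 * n) * Equiv.swap u v) z : ℕ) ≤ (v : ℕ)) ↔
      ((u : ℕ) < (z : ℕ) ∧ (z : ℕ) ≤ (v : ℕ)) := by
    intro z
    have hvm : (v : ℕ) < 2 * n := v.isLt
    have hzm : (z : ℕ) < 2 * n := z.isLt
    have huv' : (u : ℕ) < (v : ℕ) := huv
    rw [Equiv.Perm.mul_apply]
    by_cases hzu : z = u
    · rw [hzu, swap_apply_left, val_finRotate]
      split_ifs <;> omega
    · by_cases hzv : z = v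
      · rw [hzv, swap_apply_right, val_finRotate]
        split_ifs <;> omega
      · rw [swap_apply_of_ne_of_ne hzu hzv, val_finRotate]
        have h1 : (z : ℕ) ≠ (u : ℕ) := fun h => hzu (Fin.ext h)
        have h2 : (z : ℕ) ≠ (v : ℕ) := fun h => hzv (Fin.ext h)
        split_ifs <;> omega
  have hPb := sameCycle_invariant (P := fun z : Fin (2 * n) =>
    ((u : ℕ) < (z : ℕ) ∧ (z : ℕ) ≤ (v : ℕ))) hP hsc
  -- translate to Inside
  have hbv : b ≠ v := by
    rcases max_cases a (f a) with ⟨h, _⟩ | ⟨h, _⟩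
    · rw [hv, h]; exact hba
    · rw [hv, h]; exact hbfa
  have hfbv : f b ≠ v := by
    rcases max_cases a (f a) with ⟨h, _⟩ | ⟨h, _⟩
    · rw [hv, h]; exact hfbne_a
    · rw [hv, h]; exact hfbne_fa
  have hbv' : (b : ℕ) ≠ (v : ℕ) := fun h => hbv (Fin.ext h)
  have hfbv' : (f b : ℕ) ≠ (v : ℕ) := fun h => hfbv (Fin.ext h)
  have hIb : Inside f a b ↔ ((u : ℕ) < (b : ℕ) ∧ (b : ℕ) ≤ (v : ℕ)) := by
    rw [Inside, ← hu, ← hv, Fin.lt_def, Fin.lt_def]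
    omega
  have hIfb : Inside f a (f b) ↔ ((u : ℕ) < (f b : ℕ) ∧ (f b : ℕ) ≤ (v : ℕ)) := by
    rw [Inside, ← hu, ← hv, Fin.lt_def, Fin.lt_def]
    omega
  have hPb' : ((u : ℕ) < (b : ℕ) ∧ (b : ℕ) ≤ (v : ℕ)) ↔
      ((u : ℕ) < (f b : ℕ) ∧ (f b : ℕ) ≤ (v : ℕ)) := hPb
  rw [hIb, hIfb] at hiff
  tauto


end ChordProofAux

open ChordProofAux Equiv Equiv.Perm Finset

/-- If the intersection graph of a chord diagram with `n ≥ 2` chords is connected,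
then its genus is at least 1; equivalently the associated surface has at most
`n - 1` boundary components. -/
theorem genus_pos_of_connected {n : ℕ} (hn : 2 ≤ n) (f : Equiv.Perm (Fin (2 * n)))
    (hf : ∀ x, f (f x) = x) (hfix : ∀ x, f x ≠ x)
    (hconn : (SimpleGraph.fromRel (fun i j => Crosses f i j)).Connected) :
    1 ≤ genus f ∧ boundaryCount f ≤ n - 1 := by
  classical
  have hm4 : 4 ≤ 2 * n := by omega
  -- extract a crossing pair from connectivity
  obtain ⟨a, b, hcross⟩ : ∃ a b, Crosses f a b := by
    have key : ∀ (u v : Fin (2 * n))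
        (w : (SimpleGraph.fromRel (fun i j => Crosses f i j)).Walk u v), u ≠ v →
        ∃ a b, Crosses f a b := by
      intro u v w
      induction w with
      | nil => exact fun h => absurd rfl h
      | cons hadj p ih =>
        intro _
        rw [SimpleGraph.fromRel_adj] at hadj
        rcases hadj.2 with h | h
        exacts [⟨_, _, h⟩, ⟨_, _, h⟩]
    obtain ⟨w⟩ := hconn.preconnected ⟨0, by omega⟩ ⟨1, by omega⟩
    refine key _ _ w (fun e => ?_)
    have := congrArg Fin.val e
    simp at this
  obtain ⟨hfa, hfb, hba, hbfa, hiff⟩ := hcross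
  have hcross' : Crosses f a b := ⟨hfa, hfb, hba, hbfa, hiff⟩
  have hfbne_a : f b ≠ a := fun e => hbfa (by rw [← e, hf b])
  have hfbne_fa : f b ≠ f a := fun e => hba (by rw [← hf b, e, hf a])
  set τa := Equiv.swap a (f a) with hτa
  set τb := Equiv.swap b (f b) with hτb
  set h := τb * (τa * f) with hh
  have hdecomp : f = τa * (τb * h) := by
    rw [hh, Equiv.swap_mul_self_mul, Equiv.swap_mul_self_mul]
  have hval : ∀ x, h x = if x = a ∨ x = f a ∨ x = b ∨ x = f b then x else f x := by
    intro x
    rw [hh, Equiv.Perm.mul_apply, Equiv.Perm.mul_apply]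
    by_cases h1 : x = a
    · rw [if_pos (Or.inl h1), h1, hτa, Equiv.swap_apply_right, hτb,
        Equiv.swap_apply_of_ne_of_ne (Ne.symm hba) (Ne.symm hfbne_a)]
    · by_cases h2 : x = f a
      · rw [if_pos (Or.inr (Or.inl h2)), h2, hf, hτa, Equiv.swap_apply_left, hτb,
          Equiv.swap_apply_of_ne_of_ne (Ne.symm hbfa) (Ne.symm hfbne_fa)]
      · by_cases h3 : x = b
        · rw [if_pos (Or.inr (Or.inr (Or.inl h3))), h3, hτa,
            Equiv.swap_apply_of_ne_of_ne hfbne_a hfbne_fa, hτb, Equiv.swap_apply_right]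
        · by_cases h4 : x = f b
          · rw [if_pos (Or.inr (Or.inr (Or.inr h4))), h4, hf, hτa,
              Equiv.swap_apply_of_ne_of_ne hba hbfa, hτb, Equiv.swap_apply_left]
          · rw [if_neg (by tauto)]
            have hn1 : f x ≠ a := fun e => h2 (by rw [← hf x, e])
            have hn2 : f x ≠ f a := fun e => h1 (by rw [← hf x, e, hf])
            have hn3 : f x ≠ b := fun e => h4 (by rw [← hf x, e])
            have hn4 : f x ≠ f b := fun e => h3 (by rw [← hf x, e, hf])
            rw [hτa, Equiv.swap_apply_of_ne_of_ne hn1 hn2, hτb,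
              Equiv.swap_apply_of_ne_of_ne hn3 hn4]
  have hinv : h * h = 1 := by
    apply Equiv.ext
    intro y
    rw [Equiv.Perm.mul_apply, Equiv.Perm.one_apply]
    by_cases hy : y = a ∨ y = f a ∨ y = b ∨ y = f b
    · rw [hval y, if_pos hy, hval y, if_pos hy]
    · rw [hval y, if_neg hy, hval (f y), if_neg ?_, hf]
      push_neg at hy ⊢
      obtain ⟨hy1, hy2, hy3, hy4⟩ := hy
      refine ⟨fun e => hy2 (by rw [← hf y, e]), fun e => hy1 (by rw [← hf y, e, hf]),
        fun e => hy4 (by rw [← hf y, e]), fun e => hy3 (by rw [← hf y, e, hf])⟩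
  have hsupp : h.support.card ≤ 2 * n - 4 := by
    have hsub : h.support ⊆ Finset.univ \ {a, f a, b, f b} := by
      intro y hy
      rw [Equiv.Perm.mem_support] at hy
      rw [Finset.mem_sdiff]
      refine ⟨Finset.mem_univ _, fun hmem => hy ?_⟩
      rw [hval y, if_pos (by simpa [Finset.mem_insert, Finset.mem_singleton] using hmem)]
    have hc4 : ({a, f a, b, f b} : Finset (Fin (2 * n))).card = 4 := by
      rw [Finset.card_insert_of_notMem (by
          simp only [Finset.mem_insert, Finset.mem_singleton]
          push_neg
          exact ⟨Ne.symm hfa, Ne.symm hba, Ne.symm hfbne_a⟩),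
        Finset.card_insert_of_notMem (by
          simp only [Finset.mem_insert, Finset.mem_singleton]
          push_neg
          exact ⟨Ne.symm hbfa, Ne.symm hfbne_fa⟩),
        Finset.card_insert_of_notMem (by
          simp only [Finset.mem_singleton]
          exact Ne.symm hfb),
        Finset.card_singleton]
    have := Finset.card_le_card hsub
    rw [Finset.card_sdiff_of_subset (Finset.subset_univ _), hc4, Finset.card_univ,
      Fintype.card_fin] at this
    exact this
  -- the boundary count estimate
  have hrw : finRotate (2 * n) * f = ((finRotate (2 * n) * τa) * τb) * h := by
    rw [hdecomp]
    rw [← mul_assoc, ← mul_assoc]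
  have hc0 : cycleCount (finRotate (2 * n)) = 1 := by
    rw [cycleCount, (isCycle_finRotate_of_le (by omega : 2 ≤ 2 * n)).cycleType,
      support_finRotate_of_le (by omega : 2 ≤ 2 * n)]
    simp
  have s1 : cycleCount (finRotate (2 * n) * τa) ≤ 2 := by
    have := cycleCount_mul_swap_le (finRotate (2 * n)) a (f a)
    rw [hc0] at this
    rw [hτa]
    exact this
  have hnsc : ¬ (finRotate (2 * n) * τa).SameCycle b (f b) := by
    rw [hτa]
    exact not_sameCycle_sigma1 f hf hcross'
  have s2 : cycleCount ((finRotate (2 * n) * τa) * τb) + 1 =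
      cycleCount (finRotate (2 * n) * τa) := by
    rw [hτb]
    exact cycleCount_mul_swap_merge hnsc
  have s3 : cycleCount (((finRotate (2 * n) * τa) * τb) * h) ≤
      cycleCount ((finRotate (2 * n) * τa) * τb) + h.support.card / 2 :=
    cycleCount_mul_involution _ _ hinv
  have hbc : boundaryCount f ≤ n - 1 := by
    rw [boundaryCount, hrw]
    omega
  -- genus
  have hnc : numChords f = n := by
    rw [numChords]
    have : f.support = Finset.univ := by
      apply Finset.eq_univ_iff_forall.mpr
      intro x
      rw [Equiv.Perm.mem_support]
      exact hfix x
    rw [this, Finset.card_univ, Fintype.card_fin]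
    omega
  refine ⟨?_, hbc⟩
  rw [genus, hnc]
  omega
end
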